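/- Let h1, h2, h3 be closed half-planes with h1 ∩ h2 ∩ h3 equal to a triangle T. Let R be a finite set of points contained in T whose convex hull is 2-dimensional. For i = 1, 2, 3, let p_i be a vertex of Conv(R) closest to the bounding line of h_i, and let W_i be the wedge with apex p_i bounded by the rays containing the two edges of Conv(R) incident to p_i (the wedge containing Conv(R)). Then W_i ⊆ h_i, and hence W_1 ∩ W_2 ∩ W_3 ⊆ T. -/

import Mathlib

abbrev Plane := EuclideanSpace ℝ (Fin 2)


lemma infDist_hyperplane (n : Plane) (hn : n ≠ 0) (c : ℝ) (x : Plane) :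
    Metric.infDist x {y : Plane | (inner ℝ n y : ℝ) = c} = |(inner ℝ n x : ℝ) - c| / ‖n‖ := by
  have hnorm : (0:ℝ) < ‖n‖ := norm_pos_iff.2 hn
  set y0 : Plane := x + ((c - inner ℝ n x) / ‖n‖ ^ 2) • n with hy0
  have hy0mem : y0 ∈ {y : Plane | (inner ℝ n y : ℝ) = c} := by
    simp only [Set.mem_setOf_eq, hy0, inner_add_right, inner_smul_right,
      real_inner_self_eq_norm_sq]
    field_simp
    ring
  apply le_antisymm
  · calc Metric.infDist x {y : Plane | (inner ℝ n y : ℝ) = c} ≤ dist x y0 :=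
          Metric.infDist_le_dist_of_mem hy0mem
      _ = |(inner ℝ n x : ℝ) - c| / ‖n‖ := by
          rw [dist_eq_norm]
          simp only [hy0]
          rw [show x - (x + ((c - inner ℝ n x) / ‖n‖ ^ 2) • n) = (-((c - inner ℝ n x) / ‖n‖ ^ 2)) • n by
            module]
          rw [norm_smul, Real.norm_eq_abs, abs_neg, abs_div, abs_sub_comm]
          rw [show |‖n‖ ^ 2| = ‖n‖ * ‖n‖ by rw [abs_of_nonneg (by positivity)]; ring]
          field_simp
  · rw [← not_lt, Metric.infDist_lt_iff ⟨y0, hy0mem⟩]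
    push_neg
    intro y hy
    rw [div_le_iff₀ hnorm, mul_comm]
    calc |(inner ℝ n x : ℝ) - c| = |(inner ℝ n (x - y) : ℝ)| := by
          rw [inner_sub_right, hy.out]
      _ ≤ ‖n‖ * ‖x - y‖ := abs_real_inner_le_norm n (x - y)
      _ = ‖n‖ * dist x y := by rw [dist_eq_norm]


/-- Let `h₁, h₂, h₃` be closed half-planes whose intersection is the triangle `T`,
and let `R ⊆ T` be a finite set with 2-dimensional convex hull.  For each `i` let
`p i` be a vertex of `Conv(R)` closest to the bounding line of `h i`, and let `W i`
be the wedge at `p i` spanned by the two convex-hull edges incident to `p i`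
(with second endpoints `q i` and `r i`).  Then `W i ⊆ h i`, and hence
`W 1 ∩ W 2 ∩ W 3 ⊆ T`. -/
theorem wedges_subset_triangle
    (n : Fin 3 → Plane) (c : Fin 3 → ℝ) (hn : ∀ i, n i ≠ 0)
    (T : Set Plane)
    (hT : T = ⋂ i, {x : Plane | (inner ℝ (n i) x : ℝ) ≤ c i})
    (R : Finset Plane) (hRT : ↑R ⊆ T)
    (hdim : affineSpan ℝ (R : Set Plane) = ⊤)
    (p q r : Fin 3 → Plane)
    (hp : ∀ i, p i ∈ R) (hq : ∀ i, q i ∈ R) (hr : ∀ i, r i ∈ R)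
    (hqp : ∀ i, q i ≠ p i) (hrp : ∀ i, r i ≠ p i)
    (hpvert : ∀ i, p i ∈ Set.extremePoints ℝ (convexHull ℝ (R : Set Plane)))
    (hedgeq : ∀ i, segment ℝ (p i) (q i) ⊆ frontier (convexHull ℝ (R : Set Plane)))
    (hedger : ∀ i, segment ℝ (p i) (r i) ⊆ frontier (convexHull ℝ (R : Set Plane)))
    (hmin : ∀ i, ∀ x ∈ R, Metric.infDist (p i) {y : Plane | (inner ℝ (n i) y : ℝ) = c i}
      ≤ Metric.infDist x {y : Plane | (inner ℝ (n i) y : ℝ) = c i})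
    (W : Fin 3 → Set Plane)
    (hW : ∀ i, W i = {z : Plane | ∃ s t : ℝ, 0 ≤ s ∧ 0 ≤ t ∧
      z = p i + s • (q i - p i) + t • (r i - p i)}) :
    (∀ i, W i ⊆ {x : Plane | (inner ℝ (n i) x : ℝ) ≤ c i}) ∧ (⋂ i, W i) ⊆ T := by
  have hhalf : ∀ x ∈ R, ∀ i, (inner ℝ (n i) x : ℝ) ≤ c i := by
    intro x hx i
    have := hRT hx
    rw [hT] at this
    exact Set.mem_iInter.1 this i
  have hmax : ∀ i, ∀ x ∈ R, (inner ℝ (n i) x : ℝ) ≤ inner ℝ (n i) (p i) := by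
    intro i x hx
    have h1 := hmin i x hx
    rw [infDist_hyperplane _ (hn i), infDist_hyperplane _ (hn i)] at h1
    rw [abs_of_nonpos (by linarith [hhalf _ (hp i) i]),
        abs_of_nonpos (by linarith [hhalf _ hx i])] at h1
    have hnorm : (0:ℝ) < ‖n i‖ := norm_pos_iff.2 (hn i)
    rw [div_le_div_iff₀ hnorm hnorm] at h1
    nlinarith
  have hWi : ∀ i, W i ⊆ {x : Plane | (inner ℝ (n i) x : ℝ) ≤ c i} := by
    intro i z hz
    rw [hW i] at hz
    obtain ⟨s, t, hs, ht, rfl⟩ := hz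
    simp only [Set.mem_setOf_eq, inner_add_right, inner_smul_right, inner_sub_right]
    have h1 := hmax i (q i) (hq i)
    have h2 := hmax i (r i) (hr i)
    have h3 := hhalf _ (hp i) i
    nlinarith [mul_nonneg hs (sub_nonneg.2 h1), mul_nonneg ht (sub_nonneg.2 h2)]
  refine ⟨hWi, ?_⟩
  intro x hx
  rw [hT]
  exact Set.mem_iInter.2 fun i => hWi i (Set.mem_iInter.1 hx i)
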